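/- Let z be a complex number with Im z > 0 and let m be a complex number with Im m > 0 satisfying m^2 + z*m + 1 = 0. Then |m| ≤ 1. -/

import Mathlib

/-- If `Im z > 0`, `Im m > 0` and `m² + z m + 1 = 0` then `|m| ≤ 1`. -/
theorem stmt_1 (z m : ℂ) (hz : 0 < z.im) (hm : 0 < m.im)
    (heq : m ^ 2 + z * m + 1 = 0) :
    ‖m‖ ≤ 1 := by
  have hm0 : m ≠ 0 := by
    intro h; rw [h] at hm; simp at hm
  have hns : 0 < Complex.normSq m := Complex.normSq_pos.mpr hm0
  have hzeq : z = -m⁻¹ - m := by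
    field_simp
    linear_combination heq
  have him : z.im = m.im / Complex.normSq m - m.im := by
    rw [hzeq]
    simp [Complex.inv_im]
    ring
  have h1 : m.im < m.im / Complex.normSq m := by
    nlinarith [hz, him]
  have h2 : Complex.normSq m < 1 := by
    rw [lt_div_iff₀ hns] at h1
    nlinarith
  nlinarith [Complex.sq_norm m, norm_nonneg m]
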